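/- arXiv:2510.04473 — 7 statements merged into one kernel-verified Lean document; each statement's English description precedes it below -/
import Mathlib

section
/- Let g ∈ EuclideanSpace ℝ (Fin n) with g ≠ 0, let H be a symmetric n×n real matrix, c ∈ ℝ, Δ > 0, and m(s) := c + ⟨g, s⟩ + (1/2)·⟨s, H·s⟩. Define the Cauchy point s_C := −t_C·g, where t_C := min(‖g‖²/⟨g, H·g⟩, Δ/‖g‖) if ⟨g, H·g⟩ > 0 and t_C := Δ/‖g‖ otherwise. Then ‖s_C‖ ≤ Δ and m(0) − m(s_C) ≥ (1/2)·‖g‖·min(Δ, ‖g‖/(‖H‖ + 1)). -/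
open scoped RealInnerProductSpace
open Metric

noncomputable section

/-- Matrix–vector multiplication as a map on Euclidean space. -/
def mulVecE {n : ℕ} (H : Matrix (Fin n) (Fin n) ℝ) (v : EuclideanSpace ℝ (Fin n)) :
    EuclideanSpace ℝ (Fin n) :=
  (EuclideanSpace.equiv (Fin n) ℝ).symm (H.mulVec (EuclideanSpace.equiv (Fin n) ℝ v))

/-- Operator 2-norm of a matrix (the norm induced by the Euclidean vector norm). -/
def opNorm {n : ℕ} (H : Matrix (Fin n) (Fin n) ℝ) : ℝ :=
  sSup {r : ℝ | ∃ v : EuclideanSpace ℝ (Fin n), ‖v‖ ≤ 1 ∧ r = ‖mulVecE H v‖}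

/-- Quadratic model about `x` with data `(c, g, H)`. -/
def qm {n : ℕ} (x : EuclideanSpace ℝ (Fin n)) (c : ℝ) (g : EuclideanSpace ℝ (Fin n))
    (H : Matrix (Fin n) (Fin n) ℝ) (y : EuclideanSpace ℝ (Fin n)) : ℝ :=
  c + ⟪g, y - x⟫ + (1 / 2) * ⟪y - x, mulVecE H (y - x)⟫

/-- `m` is a fully linear model for `f` on the closed ball `B(x, Δ)`. -/
def IsFullyLinear {n : ℕ} (f m : EuclideanSpace ℝ (Fin n) → ℝ)
    (x : EuclideanSpace ℝ (Fin n)) (Δ κmf κmg : ℝ) : Prop :=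
  ∀ y ∈ closedBall x Δ,
    |m y - f y| ≤ κmf * Δ ^ 2 ∧ ‖gradient m y - gradient f y‖ ≤ κmg * Δ

/-- `m` is a fully quadratic model for `f` on the closed ball `B(x, Δ)`. -/
def IsFullyQuadratic {n : ℕ} (f m : EuclideanSpace ℝ (Fin n) → ℝ)
    (x : EuclideanSpace ℝ (Fin n)) (Δ κmf κmg κmh : ℝ) : Prop :=
  ∀ y ∈ closedBall x Δ,
    |m y - f y| ≤ κmf * Δ ^ 3 ∧ ‖gradient m y - gradient f y‖ ≤ κmg * Δ ^ 2 ∧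
      ‖fderiv ℝ (gradient m) y - fderiv ℝ (gradient f) y‖ ≤ κmh * Δ

/-- Smallest eigenvalue of a symmetric matrix: the minimum of `⟪u, H u⟫` over unit vectors. -/
def lambdaMin {n : ℕ} (H : Matrix (Fin n) (Fin n) ℝ) : ℝ :=
  sInf {r : ℝ | ∃ u : EuclideanSpace ℝ (Fin n), ‖u‖ = 1 ∧ r = ⟪u, mulVecE H u⟫}

/-- `τ(H) = max(-λ_min(H), 0)`. -/
def tau {n : ℕ} (H : Matrix (Fin n) (Fin n) ℝ) : ℝ := max (-lambdaMin H) 0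

/-- Hessian matrix of `f` at `x`. -/
def hessMat {n : ℕ} (f : EuclideanSpace ℝ (Fin n) → ℝ) (x : EuclideanSpace ℝ (Fin n)) :
    Matrix (Fin n) (Fin n) ℝ :=
  Matrix.of fun i j => fderiv ℝ (gradient f) x (EuclideanSpace.single j 1) i

/-- ℓ∞ operator norm of a matrix: the maximum absolute row sum. -/
def linftyNorm {m k : Type*} [Fintype m] [Fintype k] (A : Matrix m k ℝ) : ℝ :=
  sSup (Set.range fun i => ∑ j, |A i j|)

def Hclm {n : ℕ} (H : Matrix (Fin n) (Fin n) ℝ) :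
    EuclideanSpace ℝ (Fin n) →L[ℝ] EuclideanSpace ℝ (Fin n) :=
  LinearMap.toContinuousLinearMap (Matrix.toEuclideanLin H)

lemma Hclm_apply {n : ℕ} (H : Matrix (Fin n) (Fin n) ℝ) (v) : Hclm H v = mulVecE H v := by
  simp [Hclm, mulVecE, Matrix.toEuclideanLin_apply]; rfl

lemma opNorm_eq {n : ℕ} (H : Matrix (Fin n) (Fin n) ℝ) : opNorm H = ‖Hclm H‖ := by
  rw [← ContinuousLinearMap.sSup_unitClosedBall_eq_norm]
  apply congrArg sSup
  ext r
  constructor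
  · rintro ⟨v, hv, rfl⟩
    exact ⟨v, by simpa using hv, by simp [Hclm_apply]⟩
  · rintro ⟨v, hv, rfl⟩
    exact ⟨v, by simpa using hv, by simp [Hclm_apply]⟩

lemma mulVecE_le {n : ℕ} (H : Matrix (Fin n) (Fin n) ℝ) (v : EuclideanSpace ℝ (Fin n)) :
    ‖mulVecE H v‖ ≤ opNorm H * ‖v‖ := by
  rw [opNorm_eq, ← Hclm_apply]; exact (Hclm H).le_opNorm v


/-- The Cauchy point is feasible and achieves the standard sufficient decrease
(Lemma `Theorem 6.3.1, Conn–Gould–Toint`). -/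
theorem cauchy_point_decrease {n : ℕ} (c : ℝ) (g : EuclideanSpace ℝ (Fin n)) (hg : g ≠ 0)
    (H : Matrix (Fin n) (Fin n) ℝ) (hHsymm : H.IsSymm) (Δ : ℝ) (hΔ : 0 < Δ)
    (m : EuclideanSpace ℝ (Fin n) → ℝ)
    (hm : ∀ s, m s = c + ⟪g, s⟫ + (1 / 2) * ⟪s, mulVecE H s⟫)
    (tC : ℝ)
    (htC : tC = if 0 < ⟪g, mulVecE H g⟫ then
        min (‖g‖ ^ 2 / ⟪g, mulVecE H g⟫) (Δ / ‖g‖) else Δ / ‖g‖)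
    (sC : EuclideanSpace ℝ (Fin n)) (hsC : sC = -(tC • g)) :
    ‖sC‖ ≤ Δ ∧ (1 / 2) * ‖g‖ * min Δ (‖g‖ / (opNorm H + 1)) ≤ m 0 - m sC := by
  set G := ‖g‖ with hGdef
  set a := ⟪g, mulVecE H g⟫ with hadef
  have hG : 0 < G := norm_pos_iff.mpr hg
  have hN0 : 0 ≤ opNorm H := by rw [opNorm_eq]; exact norm_nonneg _
  have hN : 0 < opNorm H + 1 := by linarith
  have ha_le : a ≤ (opNorm H + 1) * G ^ 2 := by
    have h1 : a ≤ ‖g‖ * ‖mulVecE H g‖ := real_inner_le_norm _ _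
    have h2 : ‖mulVecE H g‖ ≤ opNorm H * ‖g‖ := mulVecE_le H g
    nlinarith [norm_nonneg g]
  have htC_le : tC ≤ Δ / G := by
    rw [htC]; split
    · exact min_le_right _ _
    · exact le_rfl
  have htC_pos : 0 < tC := by
    rw [htC]; split
    · exact lt_min (div_pos (pow_pos hG 2) (by assumption)) (div_pos hΔ hG)
    · exact div_pos hΔ hG
  have hnorm : ‖sC‖ = tC * G := by
    rw [hsC, norm_neg, norm_smul, Real.norm_eq_abs, abs_of_pos htC_pos]
  have hfeas : ‖sC‖ ≤ Δ := by
    rw [hnorm]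
    calc tC * G ≤ (Δ / G) * G := mul_le_mul_of_nonneg_right htC_le hG.le
    _ = Δ := div_mul_cancel₀ _ hG.ne'
  refine ⟨hfeas, ?_⟩
  have hm0 : m 0 = c := by simp [hm 0]
  have hmv : mulVecE H (-(tC • g)) = -(tC • mulVecE H g) := by
    rw [← Hclm_apply, ← Hclm_apply]; simp
  have hmsC : m sC = c - tC * G ^ 2 + (1/2) * (tC ^ 2 * a) := by
    rw [hm, hsC, hmv, inner_neg_neg, inner_neg_right, real_inner_smul_right,
      real_inner_smul_left, real_inner_smul_right, real_inner_self_eq_norm_sq]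
    ring
  rw [hm0, hmsC]
  by_cases hpos : 0 < a
  · have htC' : tC = min (G ^ 2 / a) (Δ / G) := by rw [htC, if_pos hpos]
    rcases min_cases (G ^ 2 / a) (Δ / G) with ⟨hmin, hle⟩ | ⟨hmin, hle⟩
    · -- tC = G²/a
      have hta : tC * a = G ^ 2 := by
        rw [htC', hmin]; exact div_mul_cancel₀ _ hpos.ne'
      have htG : G / (opNorm H + 1) ≤ tC * G := by
        rw [div_le_iff₀ hN]
        nlinarith [mul_le_mul_of_nonneg_left ha_le hG.le]
      nlinarith [min_le_right Δ (G / (opNorm H + 1)), htC_pos, hG,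
        mul_le_mul_of_nonneg_left htG hG.le]
    · -- tC = Δ/G
      have htCG : tC * G = Δ := by rw [htC', hmin]; exact div_mul_cancel₀ _ hG.ne'
      have hta : tC * a ≤ G ^ 2 := by
        have h := (div_le_div_iff₀ hG hpos).mp hle.le
        rw [htC', hmin, div_mul_eq_mul_div, div_le_iff₀ hG]
        linarith
      have h2 : (1/2) * G * min Δ (G / (opNorm H + 1)) ≤ (1/2) * G * Δ :=
        mul_le_mul_of_nonneg_left (min_le_left _ _) (by positivity)
      have h3 : tC * G ^ 2 = Δ * G := by rw [pow_two, ← mul_assoc, htCG]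
      have h4 := mul_le_mul_of_nonneg_left hta htC_pos.le
      have h5 : tC * (tC * a) = tC ^ 2 * a := by ring
      linarith
  · have ha : a ≤ 0 := not_lt.mp hpos
    have htC' : tC = Δ / G := by rw [htC, if_neg hpos]
    have htCG : tC * G = Δ := by rw [htC']; exact div_mul_cancel₀ _ hG.ne'
    have h1 : tC ^ 2 * a ≤ 0 := mul_nonpos_of_nonneg_of_nonpos (sq_nonneg tC) ha
    have h2 : (1/2) * G * min Δ (G / (opNorm H + 1)) ≤ (1/2) * G * Δ :=
      mul_le_mul_of_nonneg_left (min_le_left _ _) (by positivity)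
    have h3 : tC * G ^ 2 = Δ * G := by rw [pow_two, ← mul_assoc, htCG]
    have h4 : 0 < Δ * G := mul_pos hΔ hG
    linarith
end
end

section
/- Let f : EuclideanSpace ℝ (Fin n) → ℝ be differentiable with gradient ∇f Lipschitz continuous with constant L_g. Let x ∈ EuclideanSpace ℝ (Fin n), Δ > 0, κ > 0, κ_H ≥ 0, and let m be a quadratic model about x, m(y) = c + ⟨g, y − x⟩ + (1/2)·⟨y − x, H·(y − x)⟩ with H symmetric and ‖H‖ ≤ κ_H. If |m(y) − f(x) − ⟨∇f(x), y − x⟩| ≤ κ·Δ² for all y in the closed ball B(x,Δ), then m is fully linear for f in B(x,Δ) with constants κ_mf = κ + L_g/2 and κ_mg = 2κ + L_g + 2κ_H. -/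
open scoped RealInnerProductSpace
open Metric

noncomputable section

open InnerProductSpace

/-- `mulVecE H` as a continuous linear map. -/
def LH {n : ℕ} (H : Matrix (Fin n) (Fin n) ℝ) :
    EuclideanSpace ℝ (Fin n) →L[ℝ] EuclideanSpace ℝ (Fin n) :=
  LinearMap.toContinuousLinearMap <|
    ((EuclideanSpace.equiv (Fin n) ℝ).symm.toLinearMap.comp H.mulVecLin).comp
      (EuclideanSpace.equiv (Fin n) ℝ).toLinearMap

lemma LH_apply {n : ℕ} (H : Matrix (Fin n) (Fin n) ℝ) (v : EuclideanSpace ℝ (Fin n)) :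
    LH H v = mulVecE H v := rfl

lemma inner_mulVecE {n : ℕ} {H : Matrix (Fin n) (Fin n) ℝ} (hH : H.IsSymm)
    (u w : EuclideanSpace ℝ (Fin n)) : ⟪mulVecE H u, w⟫ = ⟪u, mulVecE H w⟫ := by
  have h : dotProduct (H.mulVec fun i => u i) (fun i => w i)
      = dotProduct (fun i => u i) (H.mulVec fun i => w i) := by
    conv_rhs => rw [Matrix.dotProduct_mulVec, ← Matrix.mulVec_transpose, hH.eq]
  have e : ∀ v : EuclideanSpace ℝ (Fin n), EuclideanSpace.equiv (Fin n) ℝ v = fun i => v i :=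
    fun _ => rfl
  simpa [mulVecE, e, PiLp.inner_apply, RCLike.inner_apply, dotProduct,
    mul_comm] using h

lemma norm_mulVecE_le {n : ℕ} {H : Matrix (Fin n) (Fin n) ℝ} {κH : ℝ}
    (hHnorm : opNorm H ≤ κH) (v : EuclideanSpace ℝ (Fin n)) :
    ‖mulVecE H v‖ ≤ κH * ‖v‖ := by
  have hbdd : BddAbove {r : ℝ | ∃ v : EuclideanSpace ℝ (Fin n), ‖v‖ ≤ 1 ∧ r = ‖mulVecE H v‖} := by
    refine ⟨‖LH H‖, fun r hr => ?_⟩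
    obtain ⟨u, hu, rfl⟩ := hr
    calc ‖mulVecE H u‖ = ‖LH H u‖ := by rw [LH_apply]
      _ ≤ ‖LH H‖ * ‖u‖ := (LH H).le_opNorm u
      _ ≤ ‖LH H‖ * 1 := mul_le_mul_of_nonneg_left hu (norm_nonneg _)
      _ = ‖LH H‖ := mul_one _
  rcases eq_or_ne v 0 with rfl | hv
  · simp [← LH_apply]
  · have hvpos : 0 < ‖v‖ := norm_pos_iff.2 hv
    set u := ‖v‖⁻¹ • v with hu
    have hun : ‖u‖ ≤ 1 := by
      rw [hu, norm_smul, norm_inv, norm_norm, inv_mul_cancel₀ hvpos.ne']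
    have hmem : ‖mulVecE H u‖ ∈
        {r : ℝ | ∃ v : EuclideanSpace ℝ (Fin n), ‖v‖ ≤ 1 ∧ r = ‖mulVecE H v‖} := ⟨u, hun, rfl⟩
    have h1 : ‖mulVecE H u‖ ≤ κH := (le_csSup hbdd hmem).trans hHnorm
    have h2 : mulVecE H v = ‖v‖ • mulVecE H u := by
      rw [← LH_apply, ← LH_apply, hu, map_smul, smul_smul, mul_inv_cancel₀ hvpos.ne', one_smul]
    rw [h2, norm_smul, norm_norm, mul_comm]
    exact mul_le_mul_of_nonneg_right h1 hvpos.le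

lemma hasGradientAt_qm {n : ℕ} (x : EuclideanSpace ℝ (Fin n)) (c : ℝ)
    (g : EuclideanSpace ℝ (Fin n)) {H : Matrix (Fin n) (Fin n) ℝ} (hH : H.IsSymm)
    (y : EuclideanSpace ℝ (Fin n)) :
    HasGradientAt (qm x c g H) (g + mulVecE H (y - x)) y := by
  rw [hasGradientAt_iff_hasFDerivAt]
  have h1 : HasFDerivAt (fun z : EuclideanSpace ℝ (Fin n) => z - x)
      (ContinuousLinearMap.id ℝ _) y := (hasFDerivAt_id y).sub_const x
  have h2 : HasFDerivAt (fun z : EuclideanSpace ℝ (Fin n) => mulVecE H (z - x)) (LH H) y := by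
    have := (LH H).hasFDerivAt.comp y h1
    exact this
  have hlin : HasFDerivAt (fun z : EuclideanSpace ℝ (Fin n) => ⟪g, z - x⟫)
      ((fderivInnerCLM ℝ (g, y - x)).comp
      ((0 : EuclideanSpace ℝ (Fin n) →L[ℝ] EuclideanSpace ℝ (Fin n)).prod
        (ContinuousLinearMap.id ℝ _))) y :=
    (hasFDerivAt_const g y).inner ℝ h1
  have hquad : HasFDerivAt (fun z : EuclideanSpace ℝ (Fin n) => ⟪z - x, mulVecE H (z - x)⟫)
      ((fderivInnerCLM ℝ (y - x, mulVecE H (y - x))).comp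
        ((ContinuousLinearMap.id ℝ _).prod (LH H))) y := h1.inner ℝ h2
  have htot := ((hasFDerivAt_const c y).add hlin).add (hquad.const_mul (1/2 : ℝ))
  have heq : ((0 : EuclideanSpace ℝ (Fin n) →L[ℝ] ℝ) + (fderivInnerCLM ℝ (g, y - x)).comp
      ((0 : EuclideanSpace ℝ (Fin n) →L[ℝ] EuclideanSpace ℝ (Fin n)).prod
        (ContinuousLinearMap.id ℝ _)) +
      (1/2 : ℝ) • (fderivInnerCLM ℝ (y - x, mulVecE H (y - x))).comp
        ((ContinuousLinearMap.id ℝ _).prod (LH H)))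
      = toDual ℝ (EuclideanSpace ℝ (Fin n)) (g + mulVecE H (y - x)) := by
    ext h
    simp only [ContinuousLinearMap.add_apply, ContinuousLinearMap.zero_apply,
      ContinuousLinearMap.comp_apply, ContinuousLinearMap.prod_apply,
      ContinuousLinearMap.id_apply, ContinuousLinearMap.smul_apply,
      fderivInnerCLM_apply, toDual_apply_apply, smul_eq_mul, LH_apply]
    rw [inner_zero_left, ← inner_mulVecE hH (y - x) h, inner_add_left,
      real_inner_comm h (mulVecE H (y - x))]
    ring
  rw [← heq]
  exact htot

lemma taylor_sq_bound {n : ℕ} (f : EuclideanSpace ℝ (Fin n) → ℝ) (hf : Differentiable ℝ f)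
    (Lg : NNReal) (hLip : LipschitzWith Lg (gradient f)) (x y : EuclideanSpace ℝ (Fin n)) :
    |f y - f x - ⟪gradient f x, y - x⟫| ≤ (Lg : ℝ) / 2 * ‖y - x‖ ^ 2 := by
  set v := y - x with hv
  set φ' : ℝ → ℝ := fun t => ⟪gradient f (x + t • v), v⟫ with hφ'
  have hderiv : ∀ t : ℝ, HasDerivAt (fun t => f (x + t • v)) (φ' t) t := by
    intro t
    have hline : HasDerivAt (fun t : ℝ => x + t • v) v t := by
      simpa using ((hasDerivAt_id t).smul_const v).const_add x
    have hfd : HasFDerivAt f (toDual ℝ _ (gradient f (x + t • v))) (x + t • v) :=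
      ((hf _).hasGradientAt).hasFDerivAt
    exact hfd.comp_hasDerivAt t hline
  have hgc : Continuous (gradient f) := hLip.continuous
  have hcont : Continuous φ' := by
    apply Continuous.inner
    · exact hgc.comp (by continuity)
    · exact continuous_const
  have hint : ∫ t in (0:ℝ)..1, φ' t = f y - f x := by
    rw [intervalIntegral.integral_eq_sub_of_hasDerivAt (fun t _ => hderiv t)
      (hcont.intervalIntegrable 0 1)]
    simp [hv]
  have hzero : φ' 0 = ⟪gradient f x, v⟫ := by simp [hφ']
  have hmain : f y - f x - ⟪gradient f x, v⟫ = ∫ t in (0:ℝ)..1, (φ' t - φ' 0) := by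
    rw [intervalIntegral.integral_sub (hcont.intervalIntegrable 0 1)
      intervalIntegrable_const, hint, intervalIntegral.integral_const, hzero]
    simp
  rw [hmain, ← Real.norm_eq_abs]
  have hbound : ∀ᵐ t ∂MeasureTheory.volume.restrict (Set.uIoc (0:ℝ) 1),
      ‖φ' t - φ' 0‖ ≤ (Lg : ℝ) * ‖v‖ ^ 2 * t := by
    refine MeasureTheory.ae_restrict_of_forall_mem measurableSet_uIoc fun t ht => ?_
    rw [Set.uIoc_of_le zero_le_one] at ht
    have hsub : φ' t - φ' 0 = ⟪gradient f (x + t • v) - gradient f x, v⟫ := by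
      rw [inner_sub_left, hzero]
    rw [hsub, Real.norm_eq_abs]
    calc |⟪gradient f (x + t • v) - gradient f x, v⟫|
        ≤ ‖gradient f (x + t • v) - gradient f x‖ * ‖v‖ := abs_real_inner_le_norm _ _
      _ ≤ ((Lg : ℝ) * ‖x + t • v - x‖) * ‖v‖ := by
          apply mul_le_mul_of_nonneg_right _ (norm_nonneg v)
          simpa [dist_eq_norm] using hLip.dist_le_mul (x + t • v) x
      _ = (Lg : ℝ) * ‖v‖ ^ 2 * t := by
          rw [show x + t • v - x = t • v by abel, norm_smul]
          rw [Real.norm_eq_abs, abs_of_pos ht.1]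
          ring
  have hgint : IntervalIntegrable (fun t => (Lg : ℝ) * ‖v‖ ^ 2 * t)
      MeasureTheory.volume 0 1 := (continuous_const.mul continuous_id).intervalIntegrable 0 1
  calc ‖∫ t in (0:ℝ)..1, (φ' t - φ' 0)‖
      ≤ |∫ t in (0:ℝ)..1, (Lg : ℝ) * ‖v‖ ^ 2 * t| :=
        intervalIntegral.norm_integral_le_abs_of_norm_le hbound hgint
    _ = (Lg : ℝ) / 2 * ‖v‖ ^ 2 := by
        rw [intervalIntegral.integral_const_mul, integral_id]
        rw [abs_of_nonneg (by positivity)]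
        ring

/-- A quadratic model whose values are within `κ·Δ²` of the first-order Taylor series of `f`
on `B(x,Δ)` is fully linear with constants `κ_mf = κ + L_g/2`, `κ_mg = 2κ + L_g + 2κ_H`. -/
theorem fully_linear_of_taylor_accuracy {n : ℕ}
    (f : EuclideanSpace ℝ (Fin n) → ℝ) (hf : Differentiable ℝ f)
    (Lg : NNReal) (hLip : LipschitzWith Lg (gradient f))
    (x : EuclideanSpace ℝ (Fin n)) (Δ : ℝ) (hΔ : 0 < Δ)
    (κ : ℝ) (hκ : 0 < κ) (κH : ℝ) (hκH : 0 ≤ κH)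
    (c : ℝ) (g : EuclideanSpace ℝ (Fin n)) (H : Matrix (Fin n) (Fin n) ℝ)
    (hHsymm : H.IsSymm) (hHnorm : opNorm H ≤ κH)
    (m : EuclideanSpace ℝ (Fin n) → ℝ) (hm : ∀ y, m y = qm x c g H y)
    (happrox : ∀ y ∈ closedBall x Δ,
      |m y - f x - ⟪gradient f x, y - x⟫| ≤ κ * Δ ^ 2) :
    IsFullyLinear f m x Δ (κ + (Lg : ℝ) / 2) (2 * κ + (Lg : ℝ) + 2 * κH) := by
  have hgradm : ∀ y, gradient m y = g + mulVecE H (y - x) := by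
    intro y
    have hmq : m = qm x c g H := funext hm
    rw [hmq]
    exact (hasGradientAt_qm x c g hHsymm y).gradient
  -- bound on ‖g - ∇f x‖
  have hx0 : |c - f x| ≤ κ * Δ ^ 2 := by
    have := happrox x (mem_closedBall_self hΔ.le)
    simpa [hm, qm] using this
  have hdbound : ‖g - gradient f x‖ ≤ 2 * κ * Δ + κH * Δ / 2 := by
    set d := g - gradient f x with hdd
    rcases eq_or_ne d 0 with hd0 | hd0
    · rw [hd0, norm_zero]; positivity
    · have hdpos : 0 < ‖d‖ := norm_pos_iff.2 hd0
      set u := (Δ / ‖d‖) • d with hud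
      have hun : ‖u‖ = Δ := by
        rw [hud, norm_smul, Real.norm_eq_abs, abs_of_pos (by positivity),
          div_mul_cancel₀ _ hdpos.ne']
      have hyw : x + u ∈ closedBall x Δ := by
        simp [dist_eq_norm, hun]
      have h2 := happrox (x + u) hyw
      have hA : m (x + u) - f x - ⟪gradient f x, x + u - x⟫
          = (c - f x) + ⟪d, u⟫ + (1/2) * ⟪u, mulVecE H u⟫ := by
        rw [hm, qm, add_sub_cancel_left, hdd, inner_sub_left]
        ring
      rw [hA] at h2
      have hdu : ⟪d, u⟫ = Δ * ‖d‖ := by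
        rw [hud, real_inner_smul_right, real_inner_self_eq_norm_sq]
        field_simp
      have hquad : |⟪u, mulVecE H u⟫| ≤ κH * Δ ^ 2 := by
        calc |⟪u, mulVecE H u⟫| ≤ ‖u‖ * ‖mulVecE H u‖ := abs_real_inner_le_norm _ _
          _ ≤ ‖u‖ * (κH * ‖u‖) :=
              mul_le_mul_of_nonneg_left (norm_mulVecE_le hHnorm u) (norm_nonneg _)
          _ = κH * Δ ^ 2 := by rw [hun]; ring
      have habs := abs_sub_abs_le_abs_sub (⟪d, u⟫) (-(c - f x) - (1/2) * ⟪u, mulVecE H u⟫)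
      have key : Δ * ‖d‖ ≤ κ * Δ ^ 2 + κ * Δ ^ 2 + (1/2) * (κH * Δ ^ 2) := by
        have h3 : |⟪d, u⟫| ≤ |c - f x + ⟪d, u⟫ + 1 / 2 * ⟪u, mulVecE H u⟫|
            + |c - f x| + (1/2) * |⟪u, mulVecE H u⟫| := by
          have := abs_add_le (c - f x + ⟪d, u⟫ + 1 / 2 * ⟪u, mulVecE H u⟫)
            (-(c - f x) - 1 / 2 * ⟪u, mulVecE H u⟫)
          have h4 : |-(c - f x) - 1 / 2 * ⟪u, mulVecE H u⟫| ≤ |c - f x|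
              + (1/2) * |⟪u, mulVecE H u⟫| := by
            calc |-(c - f x) - 1 / 2 * ⟪u, mulVecE H u⟫|
                ≤ |-(c - f x)| + |1 / 2 * ⟪u, mulVecE H u⟫| := abs_sub _ _
              _ = |c - f x| + (1/2) * |⟪u, mulVecE H u⟫| := by
                  rw [abs_neg, abs_mul]
                  norm_num
          calc |⟪d, u⟫| = |c - f x + ⟪d, u⟫ + 1 / 2 * ⟪u, mulVecE H u⟫
              + (-(c - f x) - 1 / 2 * ⟪u, mulVecE H u⟫)| := by ring_nf
            _ ≤ _ := this
            _ ≤ _ := by linarith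
        have h5 : |⟪d, u⟫| = Δ * ‖d‖ := by
          rw [hdu, abs_of_nonneg (by positivity)]
        linarith
      have : ‖d‖ ≤ 2 * κ * Δ + κH * Δ / 2 := by
        have hΔ2 : Δ ^ 2 = Δ * Δ := sq Δ
        rw [hΔ2] at key
        nlinarith
      exact this
  intro y hy
  have hyx : ‖y - x‖ ≤ Δ := by
    rw [← dist_eq_norm]
    exact mem_closedBall.1 hy
  have htay := taylor_sq_bound f hf Lg hLip x y
  have hLg0 : (0:ℝ) ≤ (Lg : ℝ) := Lg.coe_nonneg
  constructor
  · have h1 := happrox y hy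
    have hsq : ‖y - x‖ ^ 2 ≤ Δ ^ 2 := by
      have := sq_le_sq' (by linarith [norm_nonneg (y - x)]) hyx
      simpa using this
    calc |m y - f y| = |(m y - f x - ⟪gradient f x, y - x⟫)
          - (f y - f x - ⟪gradient f x, y - x⟫)| := by ring_nf
      _ ≤ |m y - f x - ⟪gradient f x, y - x⟫| + |f y - f x - ⟪gradient f x, y - x⟫| :=
          abs_sub _ _
      _ ≤ κ * Δ ^ 2 + (Lg : ℝ) / 2 * ‖y - x‖ ^ 2 := add_le_add h1 htay
      _ ≤ (κ + (Lg : ℝ) / 2) * Δ ^ 2 := by nlinarith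
  · have hHv : ‖mulVecE H (y - x)‖ ≤ κH * Δ := by
      calc ‖mulVecE H (y - x)‖ ≤ κH * ‖y - x‖ := norm_mulVecE_le hHnorm (y - x)
        _ ≤ κH * Δ := mul_le_mul_of_nonneg_left hyx hκH
    have hLipb : ‖gradient f x - gradient f y‖ ≤ (Lg : ℝ) * Δ := by
      calc ‖gradient f x - gradient f y‖ ≤ (Lg : ℝ) * ‖x - y‖ := by
            simpa [dist_eq_norm] using hLip.dist_le_mul x y
        _ ≤ (Lg : ℝ) * Δ := by
            rw [norm_sub_rev]
            exact mul_le_mul_of_nonneg_left hyx hLg0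
    have hsplit : gradient m y - gradient f y
        = (g - gradient f x) + mulVecE H (y - x) + (gradient f x - gradient f y) := by
      rw [hgradm]
      abel
    calc ‖gradient m y - gradient f y‖
        = ‖(g - gradient f x) + mulVecE H (y - x) + (gradient f x - gradient f y)‖ := by
          rw [hsplit]
      _ ≤ ‖g - gradient f x‖ + ‖mulVecE H (y - x)‖ + ‖gradient f x - gradient f y‖ :=
          norm_add₃_le
      _ ≤ (2 * κ * Δ + κH * Δ / 2) + κH * Δ + (Lg : ℝ) * Δ :=
          add_le_add (add_le_add hdbound hHv) hLipb
      _ ≤ (2 * κ + (Lg : ℝ) + 2 * κH) * Δ := by nlinarith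
end
end

section
/- Let f : EuclideanSpace ℝ (Fin n) → ℝ be differentiable, x ∈ EuclideanSpace ℝ (Fin n), Δ > 0, and let m be a quadratic model about x with data (c, g, H), H symmetric, ‖H‖ ≤ κ_H − 1 for some κ_H ≥ 1. Suppose m is fully linear for f in the closed ball B(x,Δ) with constants κ_mf, κ_mg > 0, and suppose s ∈ EuclideanSpace ℝ (Fin n) satisfies ‖s‖ ≤ Δ and m(x) − m(x+s) ≥ κ_s·‖g‖·min(Δ, ‖g‖/(‖H‖ + 1)) for some κ_s ∈ (0, 1/2). Let η_S ∈ (0,1), μ_c > 0, and define ρ := (f(x) − f(x+s))/(m(x) − m(x+s)). If g ≠ 0 and Δ ≤ min(κ_s·(1 − η_S)/(2κ_mf), 1/κ_H, 1/μ_c)·‖g‖, then ρ ≥ η_S and ‖g‖ ≥ μ_c·Δ. -/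
open scoped RealInnerProductSpace
open Metric

noncomputable section

lemma opNorm_nonneg' {n : ℕ} (H : Matrix (Fin n) (Fin n) ℝ) : 0 ≤ opNorm H := by
  classical
  set e := EuclideanSpace.equiv (Fin n) ℝ
  set L : EuclideanSpace ℝ (Fin n) →ₗ[ℝ] EuclideanSpace ℝ (Fin n) :=
    (e.symm.toLinearEquiv.toLinearMap.comp (Matrix.mulVecLin H)).comp e.toLinearEquiv.toLinearMap
    with hL
  let hLC := LinearMap.toContinuousLinearMap L
  have heq : ∀ v, mulVecE H v = hLC v := fun v => rfl
  have hb : BddAbove {r : ℝ | ∃ v : EuclideanSpace ℝ (Fin n), ‖v‖ ≤ 1 ∧ r = ‖mulVecE H v‖} := by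
    refine ⟨‖hLC‖, ?_⟩
    rintro r ⟨v, hv, rfl⟩
    rw [heq]
    calc ‖hLC v‖ ≤ ‖hLC‖ * ‖v‖ := hLC.le_opNorm v
      _ ≤ ‖hLC‖ * 1 := by
          have := norm_nonneg hLC
          nlinarith
      _ = ‖hLC‖ := mul_one _
  refine le_csSup hb ⟨0, by simp, ?_⟩
  rw [heq, map_zero, norm_zero]

/-- If the trust-region radius is small enough relative to `‖g‖`, the iteration is
very successful (Lemma `lem_very_successful_dfo`). -/
theorem very_successful_iteration {n : ℕ}
    (f : EuclideanSpace ℝ (Fin n) → ℝ) (hf : Differentiable ℝ f)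
    (x : EuclideanSpace ℝ (Fin n)) (Δ : ℝ) (hΔ : 0 < Δ)
    (c : ℝ) (g : EuclideanSpace ℝ (Fin n)) (H : Matrix (Fin n) (Fin n) ℝ)
    (hHsymm : H.IsSymm) (κH : ℝ) (hκH : 1 ≤ κH) (hHnorm : opNorm H ≤ κH - 1)
    (m : EuclideanSpace ℝ (Fin n) → ℝ) (hm : ∀ y, m y = qm x c g H y)
    (κmf κmg : ℝ) (hκmf : 0 < κmf) (hκmg : 0 < κmg)
    (hFL : IsFullyLinear f m x Δ κmf κmg)
    (s : EuclideanSpace ℝ (Fin n)) (hs : ‖s‖ ≤ Δ)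
    (κs : ℝ) (hκs : κs ∈ Set.Ioo (0 : ℝ) (1 / 2))
    (hdec : κs * ‖g‖ * min Δ (‖g‖ / (opNorm H + 1)) ≤ m x - m (x + s))
    (ηS μc : ℝ) (hηS : ηS ∈ Set.Ioo (0 : ℝ) 1) (hμc : 0 < μc)
    (ρ : ℝ) (hρ : ρ = (f x - f (x + s)) / (m x - m (x + s)))
    (hgne : g ≠ 0)
    (hΔsmall : Δ ≤ min (κs * (1 - ηS) / (2 * κmf)) (min (1 / κH) (1 / μc)) * ‖g‖) :
    ηS ≤ ρ ∧ μc * Δ ≤ ‖g‖ := by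
  obtain ⟨hκs0, hκs2⟩ := hκs
  obtain ⟨hηS0, hηS1⟩ := hηS
  have hgpos : 0 < ‖g‖ := norm_pos_iff.mpr hgne
  have hκH0 : 0 < κH := lt_of_lt_of_le one_pos hκH
  have hΔκH : Δ ≤ 1 / κH * ‖g‖ :=
    hΔsmall.trans (mul_le_mul_of_nonneg_right
      (le_trans (min_le_right _ _) (min_le_left _ _)) hgpos.le)
  have hΔμc : Δ ≤ 1 / μc * ‖g‖ :=
    hΔsmall.trans (mul_le_mul_of_nonneg_right
      (le_trans (min_le_right _ _) (min_le_right _ _)) hgpos.le)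
  have hΔκmf : Δ ≤ κs * (1 - ηS) / (2 * κmf) * ‖g‖ :=
    hΔsmall.trans (mul_le_mul_of_nonneg_right (min_le_left _ _) hgpos.le)
  have hμcΔ : μc * Δ ≤ ‖g‖ := by
    rw [div_mul_eq_mul_div, le_div_iff₀ hμc] at hΔμc
    linarith [hΔμc]
  have hH0 : 0 ≤ opNorm H := opNorm_nonneg' H
  have hHpos : 0 < opNorm H + 1 := by linarith
  have hmin : min Δ (‖g‖ / (opNorm H + 1)) = Δ := by
    apply min_eq_left
    rw [le_div_iff₀ hHpos]
    have : Δ * κH ≤ ‖g‖ := by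
      rw [div_mul_eq_mul_div, le_div_iff₀ hκH0] at hΔκH
      linarith
    nlinarith
  rw [hmin] at hdec
  have hDpos : 0 < m x - m (x + s) := lt_of_lt_of_le (by positivity) hdec
  have hxmem : x ∈ closedBall x Δ := mem_closedBall_self hΔ.le
  have hxsmem : x + s ∈ closedBall x Δ := by
    rw [mem_closedBall_iff_norm, add_sub_cancel_left]
    exact hs
  have h1 := (hFL x hxmem).1
  have h2 := (hFL (x + s) hxsmem).1
  have ha1 : |m x - f x| ≤ κmf * Δ ^ 2 := h1
  have ha2 : |m (x + s) - f (x + s)| ≤ κmf * Δ ^ 2 := h2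
  have hb1 := abs_le.mp ha1
  have hb2 := abs_le.mp ha2
  have hnum : m x - m (x + s) - 2 * (κmf * Δ ^ 2) ≤ f x - f (x + s) := by linarith [hb1.1, hb1.2, hb2.1, hb2.2]
  have hkey : 2 * κmf * Δ ≤ κs * (1 - ηS) * ‖g‖ := by
    rw [div_mul_eq_mul_div, le_div_iff₀ (by positivity : (0:ℝ) < 2 * κmf)] at hΔκmf
    linarith
  have hstep : ηS * (m x - m (x + s)) ≤ f x - f (x + s) := by
    have h3 : 2 * (κmf * Δ ^ 2) ≤ (1 - ηS) * (κs * ‖g‖ * Δ) := by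
      have := mul_le_mul_of_nonneg_right hkey hΔ.le
      nlinarith
    have h4 : (1 - ηS) * (κs * ‖g‖ * Δ) ≤ (1 - ηS) * (m x - m (x + s)) := by
      have h5 : κs * ‖g‖ * Δ ≤ m x - m (x + s) := hdec
      have h6 : (0:ℝ) ≤ 1 - ηS := by linarith
      exact mul_le_mul_of_nonneg_left h5 h6
    linarith only [h3, h4, hnum]
  constructor
  · rw [hρ, le_div_iff₀ hDpos]
    linarith
  · exact hμcΔ
end
end

section
/- Let f : EuclideanSpace ℝ (Fin n) → ℝ be differentiable, bounded below by f_low, with ∇f Lipschitz continuous with constant L_g. Consider iterates of the IBO trust-region algorithm: sequences x_k ∈ EuclideanSpace ℝ (Fin n), Δ_k > 0 with Δ_0 > 0 given, quadratic models m_k about x_k with data (c_k, g_k, H_k), H_k symmetric with ‖H_k‖ ≤ κ_H − 1 for some κ_H ≥ 1, each m_k fully linear for f in B(x_k, Δ_k) with constants κ_mf, κ_mg > 0 independent of k, and steps s_k with ‖s_k‖ ≤ Δ_k and m_k(x_k) − m_k(x_k + s_k) ≥ κ_s·‖g_k‖·min(Δ_k, ‖g_k‖/(‖H_k‖ + 1))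 for some κ_s ∈ (0, 1/2); with ρ_k := (f(x_k) − f(x_k + s_k))/(m_k(x_k) − m_k(x_k + s_k)), the updates are: if ρ_k ≥ η_S and ‖g_k‖ ≥ μ_c·Δ_k then x_{k+1} = x_k + s_k and Δ_{k+1} = γ_inc·Δ_k; otherwise if ρ_k ≥ η_U and ‖g_k‖ ≥ μ_c·Δ_k then x_{k+1} = x_k + s_k and Δ_{k+1} = Δ_k; otherwise x_{k+1} = x_k and Δ_{k+1} = γ_dec·Δ_k, where 0 < γ_dec < 1 < γ_inc, 0 < η_U ≤ η_S < 1, μ_c > 0. If ε > 0 and ‖∇f(x_k)‖ ≥ ε for all k = 0, …, K−1, then Δ_k ≥ Δ_min(ε) for all k = 0, …, K, where Δ_min(ε) := min(Δ_0, γ_dec·ε/(max(2κ_mf/(κ_s·(1 − η_S)), κ_H, μ_c) + κ_mg), ε/((1 + κ_mg/μ_c)·κ_H)). -/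
open scoped RealInnerProductSpace
open Metric

noncomputable section

def mulVecCLM {n : ℕ} (H : Matrix (Fin n) (Fin n) ℝ) :
    EuclideanSpace ℝ (Fin n) →L[ℝ] EuclideanSpace ℝ (Fin n) :=
  (((EuclideanSpace.equiv (Fin n) ℝ).symm : (Fin n → ℝ) →L[ℝ] _).comp
    (H.mulVecLin.toContinuousLinearMap)).comp
      ((EuclideanSpace.equiv (Fin n) ℝ) : _ →L[ℝ] (Fin n → ℝ))

lemma mulVecCLM_apply {n : ℕ} (H : Matrix (Fin n) (Fin n) ℝ) (v : EuclideanSpace ℝ (Fin n)) :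
    mulVecCLM H v = mulVecE H v := rfl

lemma gradient_qm_center {n : ℕ} (x : EuclideanSpace ℝ (Fin n)) (c : ℝ)
    (g : EuclideanSpace ℝ (Fin n)) (H : Matrix (Fin n) (Fin n) ℝ) :
    gradient (qm x c g H) x = g := by
  apply HasGradientAt.gradient
  rw [hasGradientAt_iff_hasFDerivAt]
  have hsub : HasFDerivAt (fun y : EuclideanSpace ℝ (Fin n) => y - x)
      (ContinuousLinearMap.id ℝ _) x := (hasFDerivAt_id x).sub_const x
  have hgc : HasFDerivAt (fun _ : EuclideanSpace ℝ (Fin n) => g)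
      (0 : EuclideanSpace ℝ (Fin n) →L[ℝ] EuclideanSpace ℝ (Fin n)) x := hasFDerivAt_const g x
  have hHc : HasFDerivAt (fun y : EuclideanSpace ℝ (Fin n) => mulVecCLM H (y - x))
      ((mulVecCLM H).comp (ContinuousLinearMap.id ℝ _)) x :=
    ((mulVecCLM H).hasFDerivAt).comp x hsub
  have hlin := hgc.inner ℝ hsub
  have hqt := hsub.inner ℝ hHc
  have hconst : HasFDerivAt (fun _ : EuclideanSpace ℝ (Fin n) => c)
      (0 : EuclideanSpace ℝ (Fin n) →L[ℝ] ℝ) x := hasFDerivAt_const c x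
  have hd := (hconst.add hlin).add (hqt.const_mul (1/2 : ℝ))
  have hfun : qm x c g H = fun y => c + ⟪g, y - x⟫ + (1/2) * ⟪y - x, mulVecCLM H (y - x)⟫ := by
    funext y; rfl
  rw [hfun]
  refine hd.congr_fderiv ?_
  ext v
  simp [fderivInnerCLM_apply, mulVecCLM_apply, mulVecE, Matrix.mulVec_zero]

/-- Trust-region radius lower bound for the IBO trust-region method before reaching
first-order accuracy `ε` (Lemma `lem_delta_min_dfo`). -/
theorem delta_lower_bound_before_accuracy {n : ℕ}
    (f : EuclideanSpace ℝ (Fin n) → ℝ) (hf : Differentiable ℝ f)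
    (flow : ℝ) (hflow : ∀ y, flow ≤ f y)
    (Lg : NNReal) (hLip : LipschitzWith Lg (gradient f))
    (x : ℕ → EuclideanSpace ℝ (Fin n)) (Δ : ℕ → ℝ) (hΔpos : ∀ k, 0 < Δ k)
    (cm : ℕ → ℝ) (g : ℕ → EuclideanSpace ℝ (Fin n))
    (H : ℕ → Matrix (Fin n) (Fin n) ℝ) (hHsymm : ∀ k, (H k).IsSymm)
    (κH : ℝ) (hκH : 1 ≤ κH) (hHnorm : ∀ k, opNorm (H k) ≤ κH - 1)
    (m : ℕ → EuclideanSpace ℝ (Fin n) → ℝ)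
    (hm : ∀ k y, m k y = qm (x k) (cm k) (g k) (H k) y)
    (κmf κmg : ℝ) (hκmf : 0 < κmf) (hκmg : 0 < κmg)
    (hFL : ∀ k, IsFullyLinear f (m k) (x k) (Δ k) κmf κmg)
    (s : ℕ → EuclideanSpace ℝ (Fin n)) (hs : ∀ k, ‖s k‖ ≤ Δ k)
    (κs : ℝ) (hκs : κs ∈ Set.Ioo (0 : ℝ) (1 / 2))
    (hdec : ∀ k, κs * ‖g k‖ * min (Δ k) (‖g k‖ / (opNorm (H k) + 1)) ≤
      m k (x k) - m k (x k + s k))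
    (γdec γinc ηU ηS μc : ℝ)
    (hγdec0 : 0 < γdec) (hγdec1 : γdec < 1) (hγinc : 1 < γinc)
    (hηU : 0 < ηU) (hηUS : ηU ≤ ηS) (hηS : ηS < 1) (hμc : 0 < μc)
    (ρ : ℕ → ℝ)
    (hρ : ∀ k, ρ k = (f (x k) - f (x k + s k)) / (m k (x k) - m k (x k + s k)))
    (hVS : ∀ k, (ηS ≤ ρ k ∧ μc * Δ k ≤ ‖g k‖) →
      x (k + 1) = x k + s k ∧ Δ (k + 1) = γinc * Δ k)
    (hS : ∀ k, ¬(ηS ≤ ρ k ∧ μc * Δ k ≤ ‖g k‖) → (ηU ≤ ρ k ∧ μc * Δ k ≤ ‖g k‖) →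
      x (k + 1) = x k + s k ∧ Δ (k + 1) = Δ k)
    (hU : ∀ k, ¬(ηU ≤ ρ k ∧ μc * Δ k ≤ ‖g k‖) →
      x (k + 1) = x k ∧ Δ (k + 1) = γdec * Δ k)
    (ε : ℝ) (hε : 0 < ε) (K : ℕ)
    (hgrad : ∀ k < K, ε ≤ ‖gradient f (x k)‖)
    (Δmin : ℝ)
    (hΔmin : Δmin = min (Δ 0)
      (min (γdec * ε / (max (max (2 * κmf / (κs * (1 - ηS))) κH) μc + κmg))
        (ε / ((1 + κmg / μc) * κH)))) :
    ∀ k ≤ K, Δmin ≤ Δ k := by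
  have hκs0 := hκs.1
  have hκs2 := hκs.2
  set M : ℝ := max (max (2 * κmf / (κs * (1 - ηS))) κH) μc with hM
  have hκHM : κH ≤ M := le_trans (le_max_right _ _) (le_max_left _ _)
  have hμcM : μc ≤ M := le_max_right _ _
  have hMlb : 2 * κmf / (κs * (1 - ηS)) ≤ M := le_trans (le_max_left _ _) (le_max_left _ _)
  have hM1 : 1 ≤ M := le_trans hκH hκHM
  have hMκmg : 0 < M + κmg := by linarith
  have key : ∀ j, j < K → Δ j ≤ ε / (M + κmg) → (ηS ≤ ρ j ∧ μc * Δ j ≤ ‖g j‖) := by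
    intro j hjK hjT
    have hΔj := hΔpos j
    have hgm : gradient (m j) (x j) = g j := by
      have hmj : m j = qm (x j) (cm j) (g j) (H j) := funext (hm j)
      rw [hmj, gradient_qm_center]
    have hself : x j ∈ closedBall (x j) (Δ j) := mem_closedBall_self (le_of_lt hΔj)
    have hFL1 := (hFL j (x j) hself).2
    rw [hgm] at hFL1
    have hεΔ : (M + κmg) * Δ j ≤ ε := by
      rw [le_div_iff₀ hMκmg] at hjT; linarith
    have hgrad' := hgrad j hjK
    have htri : ‖gradient f (x j)‖ - ‖g j‖ ≤ ‖g j - gradient f (x j)‖ := by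
      rw [norm_sub_rev]; exact norm_sub_norm_le _ _
    have hglb : M * Δ j ≤ ‖g j‖ := by linarith
    have hμ : μc * Δ j ≤ ‖g j‖ :=
      le_trans (mul_le_mul_of_nonneg_right hμcM hΔj.le) hglb
    refine ⟨?_, hμ⟩
    have hON := opNorm_nonneg' (H j)
    have hONκ := hHnorm j
    have hmin : min (Δ j) (‖g j‖ / (opNorm (H j) + 1)) = Δ j := by
      apply min_eq_left
      rw [le_div_iff₀ (by linarith : (0:ℝ) < opNorm (H j) + 1)]
      calc Δ j * (opNorm (H j) + 1) ≤ Δ j * κH :=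
            mul_le_mul_of_nonneg_left (by linarith) hΔj.le
        _ ≤ Δ j * M := mul_le_mul_of_nonneg_left hκHM hΔj.le
        _ = M * Δ j := mul_comm _ _
        _ ≤ ‖g j‖ := hglb
    have hdecj := hdec j
    rw [hmin] at hdecj
    have hM0 : (0:ℝ) < M := lt_of_lt_of_le one_pos hM1
    have hg0 : 0 < ‖g j‖ := lt_of_lt_of_le (mul_pos hM0 hΔj) hglb
    have hDpos : 0 < m j (x j) - m j (x j + s j) :=
      lt_of_lt_of_le (by positivity) hdecj
    have hA := abs_le.1 (hFL j (x j) hself).1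
    have hmem2 : x j + s j ∈ closedBall (x j) (Δ j) := by
      rw [mem_closedBall, dist_eq_norm, add_sub_cancel_left]; exact hs j
    have hB := abs_le.1 (hFL j (x j + s j) hmem2).1
    have hfdec : (m j (x j) - m j (x j + s j)) - 2 * (κmf * Δ j ^ 2)
        ≤ f (x j) - f (x j + s j) := by linarith [hA.1, hA.2, hB.1, hB.2]
    have hpos1 : 0 < κs * (1 - ηS) := mul_pos hκs0 (by linarith)
    have h2κ : 2 * κmf ≤ κs * (1 - ηS) * M := by
      rw [div_le_iff₀ hpos1] at hMlb
      linarith [mul_comm M (κs * (1 - ηS))]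
    have hstep1 : κs * (M * Δ j) * Δ j ≤ κs * ‖g j‖ * Δ j :=
      mul_le_mul_of_nonneg_right (mul_le_mul_of_nonneg_left hglb hκs0.le) hΔj.le
    have e1 : κs * (M * Δ j) * Δ j ≤ m j (x j) - m j (x j + s j) := le_trans hstep1 hdecj
    have e2 : 2 * κmf * Δ j ^ 2 ≤ κs * (1 - ηS) * M * Δ j ^ 2 :=
      mul_le_mul_of_nonneg_right h2κ (sq_nonneg _)
    have e3 : κs * (1 - ηS) * M * Δ j ^ 2 = (1 - ηS) * (κs * (M * Δ j) * Δ j) := by ring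
    have e4 : (1 - ηS) * (κs * (M * Δ j) * Δ j)
        ≤ (1 - ηS) * (m j (x j) - m j (x j + s j)) :=
      mul_le_mul_of_nonneg_left e1 (by linarith)
    have hstep2 : 2 * κmf * Δ j ^ 2 ≤ (1 - ηS) * (m j (x j) - m j (x j + s j)) := by
      linarith
    have hηSD : ηS * (m j (x j) - m j (x j + s j)) ≤ f (x j) - f (x j + s j) := by
      linarith
    rw [hρ j, le_div_iff₀ hDpos]
    exact hηSD
  intro k
  induction k with
  | zero => intro _; rw [hΔmin]; exact min_le_left _ _
  | succ k ih =>
    intro hk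
    have hkK : k < K := hk
    have IH : Δmin ≤ Δ k := ih (le_of_lt hkK)
    by_cases h1 : ηS ≤ ρ k ∧ μc * Δ k ≤ ‖g k‖
    · rw [(hVS k h1).2]
      have : Δ k ≤ γinc * Δ k := le_mul_of_one_le_left (hΔpos k).le hγinc.le
      linarith
    · by_cases h2 : ηU ≤ ρ k ∧ μc * Δ k ≤ ‖g k‖
      · rw [(hS k h1 h2).2]; exact IH
      · rw [(hU k h2).2]
        have hT : ε / (M + κmg) < Δ k := by
          by_contra hle
          push_neg at hle
          have hkey := key k hkK hle
          exact h1 hkey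
        have h3 : Δmin ≤ γdec * ε / (M + κmg) := by
          rw [hΔmin]; exact le_trans (min_le_right _ _) (min_le_left _ _)
        rw [mul_div_assoc] at h3
        have h4 : γdec * (ε / (M + κmg)) ≤ γdec * Δ k :=
          mul_le_mul_of_nonneg_left hT.le hγdec0.le
        linarith
end
end

section
/- Let f : EuclideanSpace ℝ (Fin n) → ℝ be twice continuously differentiable, x ∈ EuclideanSpace ℝ (Fin n), 0 < Δ ≤ Δ_max, and let m be a quadratic model about x with data (c, g, H), H symmetric with ‖H‖ ≤ κ_H − 1 for some κ_H ≥ 1, which is fully quadratic for f in B(x,Δ) with constants κ_mf, κ_mg, κ_mh > 0. Suppose s satisfies ‖s‖ ≤ Δ and m(x) − m(x+s) ≥ κ_s·max(‖g‖·min(Δ, ‖g‖/(‖H‖ + 1)), τ(H)·Δ²) for some κ_s ∈ (0, 1/2). Let η_S ∈ (0,1), μ_c > 0, and define ρ := (f(x) − f(x+s))/(m(x) − m(x+s)). If g ≠ 0 and Δ ≤ min(κ_s·(1 − η_S)/(2κ_mf·Δ_max), 1/κ_H, 1/μ_c)·‖g‖, then ρ ≥ η_S and max(‖g‖, τ(H))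 ≥ μ_c·Δ. -/
open scoped RealInnerProductSpace
open Metric

noncomputable section

/-- Second-order analogue of the very-successful-iteration lemma, gradient case
(Lemma `lem_very_successful_dfo_2_g`). -/
theorem very_successful_iteration_second_order_grad {n : ℕ}
    (f : EuclideanSpace ℝ (Fin n) → ℝ) (hf : ContDiff ℝ 2 f)
    (x : EuclideanSpace ℝ (Fin n)) (Δ Δmax : ℝ) (hΔ : 0 < Δ) (hΔmax : Δ ≤ Δmax)
    (c : ℝ) (g : EuclideanSpace ℝ (Fin n)) (H : Matrix (Fin n) (Fin n) ℝ)
    (hHsymm : H.IsSymm) (κH : ℝ) (hκH : 1 ≤ κH) (hHnorm : opNorm H ≤ κH - 1)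
    (m : EuclideanSpace ℝ (Fin n) → ℝ) (hm : ∀ y, m y = qm x c g H y)
    (κmf κmg κmh : ℝ) (hκmf : 0 < κmf) (hκmg : 0 < κmg) (hκmh : 0 < κmh)
    (hFQ : IsFullyQuadratic f m x Δ κmf κmg κmh)
    (s : EuclideanSpace ℝ (Fin n)) (hs : ‖s‖ ≤ Δ)
    (κs : ℝ) (hκs : κs ∈ Set.Ioo (0 : ℝ) (1 / 2))
    (hdec : κs * max (‖g‖ * min Δ (‖g‖ / (opNorm H + 1))) (tau H * Δ ^ 2) ≤
      m x - m (x + s))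
    (ηS μc : ℝ) (hηS : ηS ∈ Set.Ioo (0 : ℝ) 1) (hμc : 0 < μc)
    (ρ : ℝ) (hρ : ρ = (f x - f (x + s)) / (m x - m (x + s)))
    (hgne : g ≠ 0)
    (hΔsmall : Δ ≤ min (κs * (1 - ηS) / (2 * κmf * Δmax)) (min (1 / κH) (1 / μc)) * ‖g‖) :
    ηS ≤ ρ ∧ μc * Δ ≤ max ‖g‖ (tau H) := by
  obtain ⟨hκs0, hκs2⟩ := hκs
  obtain ⟨hηS0, hηS1⟩ := hηS
  have hg : 0 < ‖g‖ := norm_pos_iff.mpr hgne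
  have hΔmax0 : 0 < Δmax := lt_of_lt_of_le hΔ hΔmax
  have hop : 0 ≤ opNorm H :=
    Real.sSup_nonneg (by rintro r ⟨v, -, rfl⟩; exact norm_nonneg _)
  -- Δ ≤ ‖g‖ / (opNorm H + 1)
  have hΔκH : Δ ≤ (1 / κH) * ‖g‖ :=
    le_trans hΔsmall (mul_le_mul_of_nonneg_right
      (le_trans (min_le_right _ _) (min_le_left _ _)) (norm_nonneg g))
  have hΔμc : Δ ≤ (1 / μc) * ‖g‖ :=
    le_trans hΔsmall (mul_le_mul_of_nonneg_right
      (le_trans (min_le_right _ _) (min_le_right _ _)) (norm_nonneg g))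
  have hκHpos : (0:ℝ) < κH := lt_of_lt_of_le one_pos hκH
  have hΔg : Δ ≤ ‖g‖ / (opNorm H + 1) := by
    have h1 : ‖g‖ / κH ≤ ‖g‖ / (opNorm H + 1) := by
      apply div_le_div_of_nonneg_left hg.le (by linarith) (by linarith)
    calc Δ ≤ (1 / κH) * ‖g‖ := hΔκH
      _ = ‖g‖ / κH := by ring
      _ ≤ _ := h1
  have hmin : min Δ (‖g‖ / (opNorm H + 1)) = Δ := min_eq_left hΔg
  have hD : κs * (‖g‖ * Δ) ≤ m x - m (x + s) := by
    refine le_trans ?_ hdec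
    rw [hmin]
    exact mul_le_mul_of_nonneg_left (le_max_left _ _) hκs0.le
  have hDpos : 0 < m x - m (x + s) := lt_of_lt_of_le (by positivity) hD
  have hx : x ∈ closedBall x Δ := mem_closedBall_self hΔ.le
  have hxs : x + s ∈ closedBall x Δ := by
    simpa [mem_closedBall, dist_eq_norm] using hs
  have h1 := abs_le.mp (hFQ x hx).1
  have h2 := abs_le.mp (hFQ _ hxs).1
  have hA : Δ ≤ κs * (1 - ηS) / (2 * κmf * Δmax) * ‖g‖ :=
    le_trans hΔsmall (mul_le_mul_of_nonneg_right (min_le_left _ _) (norm_nonneg g))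
  have hA' : Δ * (2 * κmf * Δmax) ≤ κs * (1 - ηS) * ‖g‖ := by
    rw [div_mul_eq_mul_div, le_div_iff₀ (by positivity : (0:ℝ) < 2 * κmf * Δmax)] at hA
    exact hA
  constructor
  · rw [hρ, le_div_iff₀ hDpos]
    nlinarith [mul_le_mul_of_nonneg_right hA' (sq_nonneg Δ),
      mul_le_mul_of_nonneg_right hA' hΔ.le,
      mul_le_mul_of_nonneg_left hD hηS0.le,
      mul_le_mul_of_nonneg_left hD (by linarith : (0:ℝ) ≤ 1 - ηS),
      mul_pos hκmf hΔ, sq_nonneg Δ, mul_le_mul_of_nonneg_left hΔmax (sq_nonneg Δ)]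
  · refine le_trans ?_ (le_max_left _ _)
    rw [one_div] at hΔμc
    calc μc * Δ ≤ μc * (μc⁻¹ * ‖g‖) := by
          exact mul_le_mul_of_nonneg_left hΔμc hμc.le
      _ = ‖g‖ := by field_simp
end
end

section
/- Let f : EuclideanSpace ℝ (Fin n) → ℝ be twice continuously differentiable, x ∈ EuclideanSpace ℝ (Fin n), Δ > 0, and let m be a quadratic model about x with data (c, g, H), H symmetric, which is fully quadratic for f in B(x,Δ) with constants κ_mf, κ_mg, κ_mh > 0. Suppose s satisfies ‖s‖ ≤ Δ and m(x) − m(x+s) ≥ κ_s·max(‖g‖·min(Δ, ‖g‖/(‖H‖ + 1)), τ(H)·Δ²) for some κ_s ∈ (0, 1/2). Let η_S ∈ (0,1), μ_c > 0, and define ρ := (f(x) − f(x+s))/(m(x) − m(x+s)). If τ(H) > 0 and Δ ≤ min(κ_s·(1 − η_S)/(2κ_mf), 1/μ_c)·τ(H), then ρ ≥ η_S and max(‖g‖, τ(H)) ≥ μ_c·Δ. -/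
open scoped RealInnerProductSpace
open Metric

noncomputable section

/-- Second-order analogue of the very-successful-iteration lemma, negative-curvature case
(Lemma `lem_very_successful_dfo_2_H`). -/
theorem very_successful_iteration_second_order_curvature {n : ℕ}
    (f : EuclideanSpace ℝ (Fin n) → ℝ) (hf : ContDiff ℝ 2 f)
    (x : EuclideanSpace ℝ (Fin n)) (Δ : ℝ) (hΔ : 0 < Δ)
    (c : ℝ) (g : EuclideanSpace ℝ (Fin n)) (H : Matrix (Fin n) (Fin n) ℝ)
    (hHsymm : H.IsSymm)
    (m : EuclideanSpace ℝ (Fin n) → ℝ) (hm : ∀ y, m y = qm x c g H y)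
    (κmf κmg κmh : ℝ) (hκmf : 0 < κmf) (hκmg : 0 < κmg) (hκmh : 0 < κmh)
    (hFQ : IsFullyQuadratic f m x Δ κmf κmg κmh)
    (s : EuclideanSpace ℝ (Fin n)) (hs : ‖s‖ ≤ Δ)
    (κs : ℝ) (hκs : κs ∈ Set.Ioo (0 : ℝ) (1 / 2))
    (hdec : κs * max (‖g‖ * min Δ (‖g‖ / (opNorm H + 1))) (tau H * Δ ^ 2) ≤
      m x - m (x + s))
    (ηS μc : ℝ) (hηS : ηS ∈ Set.Ioo (0 : ℝ) 1) (hμc : 0 < μc)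
    (ρ : ℝ) (hρ : ρ = (f x - f (x + s)) / (m x - m (x + s)))
    (htau : 0 < tau H)
    (hΔsmall : Δ ≤ min (κs * (1 - ηS) / (2 * κmf)) (1 / μc) * tau H) :
    ηS ≤ ρ ∧ μc * Δ ≤ max ‖g‖ (tau H) := by
  obtain ⟨hκs0, hκs2⟩ := hκs
  obtain ⟨hηS0, hηS1⟩ := hηS
  have h1 : Δ ≤ κs * (1 - ηS) / (2 * κmf) * tau H :=
    le_trans hΔsmall (by nlinarith [min_le_left (κs * (1 - ηS) / (2 * κmf)) (1/μc)])
  have h2 : Δ ≤ 1 / μc * tau H :=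
    le_trans hΔsmall (by nlinarith [min_le_right (κs * (1 - ηS) / (2 * κmf)) (1/μc)])
  have hD : κs * (tau H * Δ ^ 2) ≤ m x - m (x + s) := by
    refine le_trans ?_ hdec
    have := le_max_right (‖g‖ * min Δ (‖g‖ / (opNorm H + 1))) (tau H * Δ ^ 2)
    nlinarith
  have hDpos : 0 < m x - m (x + s) := lt_of_lt_of_le (by positivity) hD
  have hx : x ∈ closedBall x Δ := mem_closedBall_self hΔ.le
  have hxs : x + s ∈ closedBall x Δ := by
    rw [mem_closedBall, dist_eq_norm, add_sub_cancel_left]; exact hs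
  have e1 : |m x - f x| ≤ κmf * Δ ^ 3 := (hFQ x hx).1
  have e2 : |m (x + s) - f (x + s)| ≤ κmf * Δ ^ 3 := (hFQ (x + s) hxs).1
  have a1 := abs_le.mp e1
  have a2 := abs_le.mp e2
  constructor
  · rw [hρ, le_div_iff₀ hDpos]
    -- need 2 κmf Δ³ ≤ (1-ηS) D
    have key : 2 * κmf * Δ ≤ κs * (1 - ηS) * tau H := by
      rw [div_mul_eq_mul_div, le_div_iff₀ (by positivity)] at h1
      linarith
    nlinarith [sq_nonneg Δ, hDpos]
  · have : μc * Δ ≤ tau H := by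
      rw [div_mul_eq_mul_div, one_mul, le_div_iff₀ hμc] at h2
      linarith [mul_comm Δ μc]
    exact this.trans (le_max_right _ _)
end
end

section
/- Let f : EuclideanSpace ℝ (Fin n) → ℝ be differentiable, bounded below by f_low, with ∇f Lipschitz continuous. Consider iterates of the IBO trust-region algorithm: sequences x_k, Δ_k with Δ_0 > 0, quadratic models m_k about x_k with data (c_k, g_k, H_k), H_k symmetric with ‖H_k‖ ≤ κ_H − 1 for some κ_H ≥ 1, each m_k fully linear for f in B(x_k, Δ_k) with constants κ_mf, κ_mg > 0 independent of k, and steps s_k with ‖s_k‖ ≤ Δ_k and m_k(x_k) − m_k(x_k + s_k) ≥ κ_s·‖g_k‖·min(Δ_k, ‖g_k‖/(‖H_k‖ + 1)) for some κ_s ∈ (0, 1/2); with ρ_k := (f(x_k) − f(x_k + s_k))/(m_k(x_k) − m_k(x_k + s_k)), the updates are: if ρ_k ≥ η_S and ‖g_k‖ ≥ μ_c·Δ_k then x_{k+1} = x_k + s_k and Δ_{k+1} = γ_inc·Δ_k; otherwise if ρ_k ≥ η_U and ‖g_k‖ ≥ μ_c·Δ_k then x_{k+1} = x_k + s_k and Δ_{k+1}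 = Δ_k; otherwise x_{k+1} = x_k and Δ_{k+1} = γ_dec·Δ_k, where 0 < γ_dec < 1 < γ_inc, 0 < η_U ≤ η_S < 1, μ_c > 0. Then the trust-region radii converge to zero: Δ_k → 0 as k → ∞. -/
open scoped RealInnerProductSpace
open Metric

noncomputable section

set_option maxHeartbeats 1000000 in
/-- The trust-region radii of the IBO trust-region method converge to zero
(Lemma `lem_delta_decreases`). -/
theorem ibo_delta_tendsto_zero {n : ℕ}
    (f : EuclideanSpace ℝ (Fin n) → ℝ) (hf : Differentiable ℝ f)
    (flow : ℝ) (hflow : ∀ y, flow ≤ f y)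
    (Lg : NNReal) (hLip : LipschitzWith Lg (gradient f))
    (x : ℕ → EuclideanSpace ℝ (Fin n)) (Δ : ℕ → ℝ) (hΔpos : ∀ k, 0 < Δ k)
    (cm : ℕ → ℝ) (g : ℕ → EuclideanSpace ℝ (Fin n))
    (H : ℕ → Matrix (Fin n) (Fin n) ℝ) (hHsymm : ∀ k, (H k).IsSymm)
    (κH : ℝ) (hκH : 1 ≤ κH) (hHnorm : ∀ k, opNorm (H k) ≤ κH - 1)
    (m : ℕ → EuclideanSpace ℝ (Fin n) → ℝ)
    (hm : ∀ k y, m k y = qm (x k) (cm k) (g k) (H k) y)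
    (κmf κmg : ℝ) (hκmf : 0 < κmf) (hκmg : 0 < κmg)
    (hFL : ∀ k, IsFullyLinear f (m k) (x k) (Δ k) κmf κmg)
    (s : ℕ → EuclideanSpace ℝ (Fin n)) (hs : ∀ k, ‖s k‖ ≤ Δ k)
    (κs : ℝ) (hκs : κs ∈ Set.Ioo (0 : ℝ) (1 / 2))
    (hdec : ∀ k, κs * ‖g k‖ * min (Δ k) (‖g k‖ / (opNorm (H k) + 1)) ≤
      m k (x k) - m k (x k + s k))
    (γdec γinc ηU ηS μc : ℝ)
    (hγdec0 : 0 < γdec) (hγdec1 : γdec < 1) (hγinc : 1 < γinc)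
    (hηU : 0 < ηU) (hηUS : ηU ≤ ηS) (hηS : ηS < 1) (hμc : 0 < μc)
    (ρ : ℕ → ℝ)
    (hρ : ∀ k, ρ k = (f (x k) - f (x k + s k)) / (m k (x k) - m k (x k + s k)))
    (hVS : ∀ k, (ηS ≤ ρ k ∧ μc * Δ k ≤ ‖g k‖) →
      x (k + 1) = x k + s k ∧ Δ (k + 1) = γinc * Δ k)
    (hS : ∀ k, ¬(ηS ≤ ρ k ∧ μc * Δ k ≤ ‖g k‖) → (ηU ≤ ρ k ∧ μc * Δ k ≤ ‖g k‖) →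
      x (k + 1) = x k + s k ∧ Δ (k + 1) = Δ k)
    (hU : ∀ k, ¬(ηU ≤ ρ k ∧ μc * Δ k ≤ ‖g k‖) →
      x (k + 1) = x k ∧ Δ (k + 1) = γdec * Δ k) :
    Filter.Tendsto Δ Filter.atTop (nhds 0) := by
  classical
  obtain ⟨hκs0, hκs2⟩ := hκs
  -- successful iterations
  set S : ℕ → Prop := fun k => ηU ≤ ρ k ∧ μc * Δ k ≤ ‖g k‖ with hSdef
  set c₀ : ℝ := κs * μc * min 1 (μc / κH) with hc₀
  have hκH0 : (0:ℝ) < κH := lt_of_lt_of_le one_pos hκH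
  have hc₀pos : 0 < c₀ := by
    have : 0 < min 1 (μc / κH) := lt_min one_pos (by positivity)
    positivity
  have hopnn : ∀ k, 0 ≤ opNorm (H k) := by
    intro k
    apply Real.sSup_nonneg
    rintro r ⟨v, -, rfl⟩
    exact norm_nonneg _
  have hop1 : ∀ k, 0 < opNorm (H k) + 1 := fun k => by linarith [hopnn k]
  have hopκ : ∀ k, opNorm (H k) + 1 ≤ κH := fun k => by linarith [hHnorm k]
  -- model decrease bound on successful iterations
  have hmdec : ∀ k, S k → c₀ * Δ k ^ 2 ≤ m k (x k) - m k (x k + s k) := by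
    intro k hSk
    have hΔ := hΔpos k
    have hg : μc * Δ k ≤ ‖g k‖ := hSk.2
    have hgpos : 0 < ‖g k‖ := lt_of_lt_of_le (by positivity) hg
    have h1 : μc * Δ k / κH ≤ ‖g k‖ / (opNorm (H k) + 1) :=
      div_le_div₀ (norm_nonneg _) hg (hop1 k) (hopκ k)
    have h2 : min (Δ k) (μc * Δ k / κH) ≤ min (Δ k) (‖g k‖ / (opNorm (H k) + 1)) :=
      min_le_min le_rfl h1
    have hminnn : 0 ≤ min (Δ k) (μc * Δ k / κH) := le_min hΔ.le (by positivity)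
    have h3 : κs * (μc * Δ k) * min (Δ k) (μc * Δ k / κH) ≤
        κs * ‖g k‖ * min (Δ k) (‖g k‖ / (opNorm (H k) + 1)) := by
      apply mul_le_mul (by gcongr) h2 hminnn
      positivity
    have hmin : min (Δ k) (μc * Δ k / κH) = Δ k * min 1 (μc / κH) := by
      rw [mul_min_of_nonneg _ _ hΔ.le, mul_one]
      congr 1
      ring
    calc c₀ * Δ k ^ 2 = κs * (μc * Δ k) * (Δ k * min 1 (μc / κH)) := by rw [hc₀]; ring
      _ = κs * (μc * Δ k) * min (Δ k) (μc * Δ k / κH) := by rw [hmin]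
      _ ≤ κs * ‖g k‖ * min (Δ k) (‖g k‖ / (opNorm (H k) + 1)) := h3
      _ ≤ m k (x k) - m k (x k + s k) := hdec k
  -- function decrease on successful iterations
  have hxsucc : ∀ k, S k → x (k + 1) = x k + s k := by
    intro k hSk
    by_cases hvs : ηS ≤ ρ k ∧ μc * Δ k ≤ ‖g k‖
    · exact (hVS k hvs).1
    · exact (hS k hvs hSk).1
  have hΔsucc : ∀ k, S k → Δ (k + 1) ≤ γinc * Δ k := by
    intro k hSk
    by_cases hvs : ηS ≤ ρ k ∧ μc * Δ k ≤ ‖g k‖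
    · rw [(hVS k hvs).2]
    · rw [(hS k hvs hSk).2]
      nlinarith [hΔpos k]
  have hfdec : ∀ k, S k → ηU * (c₀ * Δ k ^ 2) ≤ f (x k) - f (x (k + 1)) := by
    intro k hSk
    have hmd := hmdec k hSk
    have hmdpos : 0 < m k (x k) - m k (x k + s k) :=
      lt_of_lt_of_le (mul_pos hc₀pos (pow_pos (hΔpos k) 2)) hmd
    have hfd : f (x k) - f (x k + s k) = ρ k * (m k (x k) - m k (x k + s k)) := by
      rw [hρ k]
      field_simp
    rw [hxsucc k hSk, hfd]
    have := hSk.1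
    nlinarith
  have hfmono : ∀ k, f (x (k + 1)) ≤ f (x k) := by
    intro k
    by_cases hSk : S k
    · have := hfdec k hSk
      have h1 : 0 < ηU * (c₀ * Δ k ^ 2) :=
        mul_pos hηU (mul_pos hc₀pos (pow_pos (hΔpos k) 2))
      linarith
    · rw [(hU k hSk).1]
  -- summability
  set b : ℕ → ℝ := fun k => if S k then ηU * c₀ * Δ k ^ 2 else 0 with hb
  have hbnn : ∀ k, 0 ≤ b k := by
    intro k
    by_cases hSk : S k
    · simp only [hb]
      rw [if_pos hSk]
      exact le_of_lt (mul_pos (mul_pos hηU hc₀pos) (pow_pos (hΔpos k) 2))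
    · simp only [hb]
      rw [if_neg hSk]
  have hbstep : ∀ k, b k ≤ f (x k) - f (x (k + 1)) := by
    intro k
    by_cases hSk : S k
    · have := hfdec k hSk
      simp only [hb]
      rw [if_pos hSk, mul_assoc]
      exact this
    · simp only [hb]
      rw [if_neg hSk, (hU k hSk).1]
      simp
  have hbsum : ∀ N, ∑ k ∈ Finset.range N, b k ≤ f (x 0) - flow := by
    intro N
    have key : ∀ N, ∑ k ∈ Finset.range N, b k ≤ f (x 0) - f (x N) := by
      intro N
      induction N with
      | zero => simp
      | succ N ih =>
        rw [Finset.sum_range_succ]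
        have := hbstep N
        linarith
    have := key N
    have := hflow (x N)
    linarith
  have hbsummable : Summable b := summable_of_sum_range_le hbnn hbsum
  have hbtend : Filter.Tendsto b Filter.atTop (nhds 0) := hbsummable.tendsto_atTop_zero
  -- conclusion
  rw [Metric.tendsto_atTop]
  intro ε hε
  set ε₁ : ℝ := min (ε / 2) (ε / (2 * γinc)) with hε₁def
  have hγincpos : (0:ℝ) < γinc := lt_trans one_pos hγinc
  have hε₁pos : 0 < ε₁ := lt_min (by positivity) (by positivity)
  obtain ⟨K, hK⟩ := (Metric.tendsto_atTop.mp hbtend) (ηU * c₀ * ε₁ ^ 2) (by positivity)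
  have hKsmall : ∀ k, K ≤ k → S k → Δ k < ε₁ := by
    intro k hk hSk
    have := hK k hk
    rw [Real.dist_eq, sub_zero] at this
    have hbk : b k = ηU * c₀ * Δ k ^ 2 := by
      simp only [hb]
      rw [if_pos hSk]
    rw [hbk, abs_of_nonneg (le_of_lt (mul_pos (mul_pos hηU hc₀pos)
      (pow_pos (hΔpos k) 2)))] at this
    have hsq : Δ k ^ 2 < ε₁ ^ 2 :=
      (mul_lt_mul_iff_right₀ (mul_pos hηU hc₀pos)).mp this
    nlinarith [hΔpos k, hε₁pos]
  -- find a point where Δ is small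
  have hK'ex : ∃ K', K ≤ K' ∧ Δ K' ≤ ε / 2 := by
    by_cases hall : ∀ k, K ≤ k → ¬S k
    · -- geometric decrease
      have hgeo : ∀ j, Δ (K + j) = γdec ^ j * Δ K := by
        intro j
        induction j with
        | zero => simp
        | succ j ih =>
          have hnS := hall (K + j) (Nat.le_add_right _ _)
          have := (hU (K + j) hnS).2
          rw [show K + (j + 1) = (K + j) + 1 from rfl, this, ih]
          ring
      have htend : Filter.Tendsto (fun j => γdec ^ j * Δ K) Filter.atTop (nhds 0) := by
        have := (tendsto_pow_atTop_nhds_zero_of_lt_one hγdec0.le hγdec1).mul_const (Δ K)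
        simpa using this
      obtain ⟨j, hj⟩ := (Metric.tendsto_atTop.mp htend) (ε / 2) (by positivity)
      have := hj j le_rfl
      rw [Real.dist_eq, sub_zero] at this
      refine ⟨K + j, Nat.le_add_right _ _, ?_⟩
      rw [hgeo j]
      calc γdec ^ j * Δ K ≤ |γdec ^ j * Δ K| := le_abs_self _
        _ ≤ ε / 2 := this.le
    · push_neg at hall
      obtain ⟨k, hk, hSk⟩ := hall
      refine ⟨k + 1, le_trans hk (Nat.le_succ _), ?_⟩
      have h1 : Δ (k + 1) ≤ γinc * Δ k := hΔsucc k hSk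
      have h2 : Δ k < ε₁ := hKsmall k hk hSk
      have h3 : ε₁ ≤ ε / (2 * γinc) := min_le_right _ _
      have : γinc * Δ k ≤ γinc * (ε / (2 * γinc)) := by nlinarith
      have heq : γinc * (ε / (2 * γinc)) = ε / 2 := by field_simp
      linarith
  obtain ⟨K', hKK', hΔK'⟩ := hK'ex
  -- from K' onward Δ stays ≤ ε/2
  have hstay : ∀ k, K' ≤ k → Δ k ≤ ε / 2 := by
    intro k hk
    induction k, hk using Nat.le_induction with
    | base => exact hΔK'
    | succ k hk ih =>
      by_cases hSk : S k
      · have h1 : Δ (k + 1) ≤ γinc * Δ k := hΔsucc k hSk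
        have h2 : Δ k < ε₁ := hKsmall k (le_trans hKK' hk) hSk
        have h3 : ε₁ ≤ ε / (2 * γinc) := min_le_right _ _
        have : γinc * Δ k ≤ γinc * (ε / (2 * γinc)) := by nlinarith
        have heq : γinc * (ε / (2 * γinc)) = ε / 2 := by field_simp
        linarith
      · have := (hU k hSk).2
        rw [this]
        nlinarith [hΔpos k]
  refine ⟨K', fun k hk => ?_⟩
  rw [Real.dist_eq, sub_zero, abs_of_pos (hΔpos k)]
  have := hstay k hk
  linarith
end
end
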